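/- Every OWA-rule (maximizing the ordered weighted average of the score vector for a nonnegative OWA-vector) weakly satisfies score Pareto optimality: for every line-up election, at least one winning line-up is score Pareto optimal. -/

import Mathlib

open Function

section Defs

variable {C P : Type*}

/-- Utilitarian (summed) score of a line-up. -/
def utilScore [Fintype P] (S : C → P → ℚ) (π : P → C) : ℚ := ∑ p, S (π p) p

/-- Winner under the utilitarian rule. -/
def IsUtilWinner [Fintype P] (S : C → P → ℚ) (π : P → C) : Prop :=
  Function.Injective π ∧
    ∀ π' : P → C, Function.Injective π' → utilScore S π' ≤ utilScore S π

/-- Egalitarian (minimum) score of a line-up. -/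
def egalScore [Fintype P] [Nonempty P] (S : C → P → ℚ) (π : P → C) : ℚ :=
  Finset.univ.inf' Finset.univ_nonempty (fun p => S (π p) p)

/-- Winner under the egalitarian rule. -/
def IsEgalWinner [Fintype P] [Nonempty P] (S : C → P → ℚ) (π : P → C) : Prop :=
  Function.Injective π ∧
    ∀ π' : P → C, Function.Injective π' → egalScore S π' ≤ egalScore S π

/-- Outcome of the sequential rule that fills positions in increasing order of the
priority `r`: each position receives a best candidate among those not assigned to
an earlier position. -/
def FixedOrderOutcome (r : P → ℕ) (S : C → P → ℚ) (π : P → C) : Prop :=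
  Function.Injective π ∧
    ∀ p : P, ∀ c : C, (∀ p' : P, r p' < r p → c ≠ π p') → S c p ≤ S (π p) p

/-- Outcome of some sequential rule: positions are filled one at a time in some order,
each receiving a best remaining candidate. -/
def SeqOutcome (S : C → P → ℚ) (π : P → C) : Prop :=
  ∃ r : P → ℕ, Function.Injective r ∧ FixedOrderOutcome r S π

/-- Outcome of the max-first rule along the order `r`: at each step the assigned
candidate-position pair has maximal score among all remaining pairs. -/
def MaxFirstOrder (r : P → ℕ) (S : C → P → ℚ) (π : P → C) : Prop :=
  Function.Injective π ∧
    ∀ p p'' : P, r p ≤ r p'' → ∀ c : C,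
      (∀ p' : P, r p' < r p → c ≠ π p') → S c p'' ≤ S (π p) p

/-- Outcome of the max-first sequential rule. -/
def MaxFirstOutcome (S : C → P → ℚ) (π : P → C) : Prop :=
  ∃ r : P → ℕ, Function.Injective r ∧ MaxFirstOrder r S π

/-- Outcome of the min-first rule along the order `r`: at each step the filled
position is one whose best remaining candidate score is smallest among the remaining
positions, and it receives a best remaining candidate. -/
def MinFirstOrder (r : P → ℕ) (S : C → P → ℚ) (π : P → C) : Prop :=
  Function.Injective π ∧
    (∀ p : P, ∀ c : C, (∀ p' : P, r p' < r p → c ≠ π p') → S c p ≤ S (π p) p) ∧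
    (∀ p p'' : P, r p ≤ r p'' →
      ∃ c : C, (∀ p' : P, r p' < r p → c ≠ π p') ∧ S (π p) p ≤ S c p'')

/-- Outcome of the min-first sequential rule. -/
def MinFirstOutcome (S : C → P → ℚ) (π : P → C) : Prop :=
  ∃ r : P → ℕ, Function.Injective r ∧ MinFirstOrder r S π

/-- A line-up is reasonably satisfying if (i) there are no two positions `p, p'` with
`score_p(π_{p'}) > score_p(π_p)` and `score_p(π_{p'}) > score_{p'}(π_{p'})`, and
(ii) no unassigned candidate scores higher on some position than its occupant. -/
def ReasonablySatisfying (S : C → P → ℚ) (π : P → C) : Prop :=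
  (¬ ∃ p p' : P, S (π p') p > S (π p) p ∧ S (π p') p > S (π p') p') ∧
  (¬ ∃ (c : C) (p : P), c ∉ Set.range π ∧ S c p > S (π p) p)

/-- A line-up is score Pareto optimal if no line-up is at least as good on every
position and strictly better on some position. -/
def ScoreParetoOptimal (S : C → P → ℚ) (π : P → C) : Prop :=
  ¬ ∃ π' : P → C, Function.Injective π' ∧
      (∀ p : P, S (π p) p ≤ S (π' p) p) ∧ (∃ p : P, S (π p) p < S (π' p) p)

/-- The entries of `v` sorted in decreasing order; `sortedDesc v i` is the
`(i+1)`-st largest entry of `v`. -/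
def sortedDesc {n : ℕ} (v : Fin n → ℚ) : Fin n → ℚ :=
  v ∘ (Tuple.sort (fun i => -v i))

/-- Ordered weighted average of `v` with OWA-vector `Λ`. -/
def owa {n : ℕ} (Λ : Fin n → ℚ) (v : Fin n → ℚ) : ℚ :=
  ∑ i, Λ i * sortedDesc v i

/-- The score vector of a line-up. -/
def scoreVec {q : ℕ} (S : C → Fin q → ℚ) (π : Fin q → C) : Fin q → ℚ :=
  fun p => S (π p) p

/-- Winner under the OWA-rule `f^Λ`. -/
def IsOWAWinner {q : ℕ} (Λ : Fin q → ℚ) (S : C → Fin q → ℚ) (π : Fin q → C) : Prop :=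
  Function.Injective π ∧
    ∀ π' : Fin q → C, Function.Injective π' →
      owa Λ (scoreVec S π') ≤ owa Λ (scoreVec S π)

end Defs


lemma sortedDesc_mono {n : ℕ} {v w : Fin n → ℚ} (h : ∀ j, v j ≤ w j) (i : Fin n) :
    sortedDesc v i ≤ sortedDesc w i := by
  classical
  set σ := Tuple.sort (fun j => -v j) with hσ
  set τ := Tuple.sort (fun j => -w j) with hτ
  have hmv : Monotone ((fun j => -v j) ∘ σ) := Tuple.monotone_sort _
  have hmw : Monotone ((fun j => -w j) ∘ τ) := Tuple.monotone_sort _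
  -- find j in σ '' Iic i not in τ '' Iio i
  have hcard : ((Finset.Iio i).image τ).card < ((Finset.Iic i).image σ).card := by
    rw [Finset.card_image_of_injective _ σ.injective,
        Finset.card_image_of_injective _ τ.injective, Fin.card_Iic, Fin.card_Iio]
    omega
  have hns : ¬ ((Finset.Iic i).image σ ⊆ (Finset.Iio i).image τ) := by
    intro hsub
    exact absurd (Finset.card_le_card hsub) (not_le.2 hcard)
  obtain ⟨j, hjA, hjB⟩ := Finset.not_subset.1 hns
  obtain ⟨k, hk, rfl⟩ := Finset.mem_image.1 hjA
  have hk' : k ≤ i := Finset.mem_Iic.1 hk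
  have hτj : i ≤ τ.symm (σ k) := by
    by_contra hlt
    push_neg at hlt
    exact hjB (Finset.mem_image.2 ⟨τ.symm (σ k), Finset.mem_Iio.2 hlt, τ.apply_symm_apply _⟩)
  have h1 : v (σ i) ≤ v (σ k) := by
    have := hmv hk'
    simp only [Function.comp_apply] at this
    linarith
  have h2 : w (τ (τ.symm (σ k))) ≤ w (τ i) := by
    have := hmw hτj
    simp only [Function.comp_apply] at this
    linarith
  rw [τ.apply_symm_apply] at h2
  calc sortedDesc v i = v (σ i) := rfl
    _ ≤ v (σ k) := h1
    _ ≤ w (σ k) := h (σ k)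
    _ ≤ w (τ i) := h2
    _ = sortedDesc w i := rfl

lemma owa_mono {n : ℕ} {Λ v w : Fin n → ℚ} (hΛ : ∀ i, 0 ≤ Λ i) (h : ∀ j, v j ≤ w j) :
    owa Λ v ≤ owa Λ w := by
  unfold owa
  apply Finset.sum_le_sum
  intro i _
  exact mul_le_mul_of_nonneg_left (sortedDesc_mono h i) (hΛ i)

/-- Every OWA-rule with a nonnegative OWA-vector weakly satisfies score Pareto
optimality: some winning line-up is score Pareto optimal. -/
theorem stmt1 {C : Type*} [Fintype C] {q : ℕ} (hq : q ≤ Fintype.card C)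
    (Λ : Fin q → ℚ) (hΛ : ∀ i, 0 ≤ Λ i) (S : C → Fin q → ℚ) :
    ∃ π : Fin q → C, IsOWAWinner Λ S π ∧ ScoreParetoOptimal S π := by
  classical
  obtain ⟨e⟩ : Nonempty (Fin q ↪ C) := by
    apply Function.Embedding.nonempty_of_card_le
    simpa using hq
  set s : Finset (Fin q → C) := Finset.univ.filter (fun π => Function.Injective π) with hs
  have hsne : s.Nonempty := ⟨e, by simp [hs, e.injective]⟩
  obtain ⟨π, hπs, hπmax⟩ := s.exists_max_image
    (fun π => toLex ((owa Λ (scoreVec S π), utilScore S π) : ℚ × ℚ)) hsne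
  have hπinj : Function.Injective π := by simpa [hs] using hπs
  have hmem : ∀ π' : Fin q → C, Function.Injective π' → π' ∈ s := by
    intro π' h; simp [hs, h]
  have hwin : ∀ π' : Fin q → C, Function.Injective π' →
      owa Λ (scoreVec S π') ≤ owa Λ (scoreVec S π) := by
    intro π' hinj'
    have := hπmax π' (hmem π' hinj')
    rcases Prod.Lex.le_iff.1 this with h | h
    · exact le_of_lt h
    · exact le_of_eq h.1
  refine ⟨π, ⟨hπinj, hwin⟩, ?_⟩
  rintro ⟨π', hinj', hle, p, hlt⟩
  have howa_le : owa Λ (scoreVec S π') ≤ owa Λ (scoreVec S π) := hwin π' hinj'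
  have howa_ge : owa Λ (scoreVec S π) ≤ owa Λ (scoreVec S π') := owa_mono hΛ hle
  have heq : owa Λ (scoreVec S π') = owa Λ (scoreVec S π) := le_antisymm howa_le howa_ge
  have hsum : utilScore S π < utilScore S π' := by
    apply Finset.sum_lt_sum (fun p _ => hle p) ⟨p, Finset.mem_univ p, hlt⟩
  have : toLex ((owa Λ (scoreVec S π), utilScore S π) : ℚ × ℚ) <
      toLex ((owa Λ (scoreVec S π'), utilScore S π') : ℚ × ℚ) := by
    rw [Prod.Lex.lt_iff]
    exact Or.inr ⟨heq.symm, hsum⟩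
  exact absurd (hπmax π' (hmem π' hinj')) (not_le.2 this)
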